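/- Let H₁, ..., H_k be finite groups and G ≅ H₁ * H₂ * ⋯ * H_k * F_q a free product with F_q free of rank q. Let g be a nontrivial element of (the canonical image of) H_i in G, and h ∈ G. Then h ∈ H_i if and only if both h and gh have finite order in G. -/

import Mathlib

set_option linter.unusedSectionVars false
set_option maxHeartbeats 1000000
open Monoid Monoid.CoprodI

namespace FPAux

variable {ι : Type*} {M : ι → Type*} [∀ i, Group (M i)] [DecidableEq ι]
  [∀ i, DecidableEq (M i)]

theorem word_prod_injective : Function.Injective (Word.prod : Word M → CoprodI M) :=
  Word.equiv.symm.injective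

theorem prod_eq_one_iff {w : Word M} : w.prod = 1 ↔ w = Word.empty := by
  constructor
  · intro h
    exact word_prod_injective (M := M) (by simpa using h)
  · rintro rfl; simp

theorem neWord_prod_ne_one {i j : ι} (w : NeWord M i j) : w.prod ≠ 1 := by
  intro h
  rw [NeWord.prod, prod_eq_one_iff] at h
  exact w.toList_ne_nil (congrArg Word.toList h)

theorem neWord_pow {i j : ι} (hij : i ≠ j) (w : NeWord M i j) (n : ℕ) :
    ∃ w' : NeWord M i j, w'.prod = w.prod ^ (n + 1) := by
  induction n with
  | zero => exact ⟨w, by simp⟩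
  | succ n ih =>
    obtain ⟨w', hw'⟩ := ih
    exact ⟨NeWord.append w' hij.symm w, by rw [NeWord.append_prod, hw']; group⟩

theorem not_isOfFinOrder_neWord {i j : ι} (hij : i ≠ j) (w : NeWord M i j) :
    ¬ IsOfFinOrder w.prod := by
  intro hfin
  obtain ⟨n, hn, hpow⟩ := hfin.exists_pow_eq_one
  obtain ⟨m, rfl⟩ : ∃ m, n = m + 1 := ⟨n - 1, by omega⟩
  obtain ⟨w', hw'⟩ := neWord_pow hij w m
  exact neWord_prod_ne_one w' (hw'.trans hpow)

/-- Lemma A: a reduced word whose first and last letters lie in different factors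
has infinite order. -/
theorem not_isOfFinOrder_prod {w : Word M} {x y : Σ i, M i}
    (h1 : w.toList.head? = some x) (h2 : w.toList.getLast? = some y)
    (hxy : x.1 ≠ y.1) : ¬ IsOfFinOrder w.prod := by
  have hne : w ≠ Word.empty := by
    intro h; rw [h] at h1; simp [Word.empty] at h1
  obtain ⟨i, j, w', hw'⟩ := NeWord.of_word w hne
  have hlw : w'.toList = w.toList := congrArg Word.toList hw'
  have hx : x = ⟨i, w'.head⟩ := by
    have := w'.toList_head?
    rw [hlw, h1] at this; replace this := this.symm
    exact (Option.some_injective _ this).symm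
  have hy : y = ⟨j, w'.last⟩ := by
    have := w'.toList_getLast?
    rw [hlw, h2] at this; replace this := this.symm
    exact (Option.some_injective _ this).symm
  have hij : i ≠ j := by rw [hx, hy] at hxy; exact hxy
  have : w'.prod = w.prod := by rw [NeWord.prod, hw']
  rw [← this]
  exact not_isOfFinOrder_neWord hij w'

theorem isOfFinOrder_conj {G : Type*} [Group G] {x : G} (c : G)
    (h : IsOfFinOrder x) : IsOfFinOrder (c * x * c⁻¹) :=
  (MulAut.conj c).toMonoidHom.isOfFinOrder h

/-- The key lemma: if `g ∈ M i` is nontrivial and both `h` and `of g * h` have finite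
order, then `h` lies in the image of `M i`. -/
theorem key {i : ι} :
    ∀ n (g : M i), g ≠ 1 → ∀ h : CoprodI M, (Word.equiv h).toList.length = n →
      IsOfFinOrder h → IsOfFinOrder (CoprodI.of g * h) → ∃ m : M i, CoprodI.of m = h := by
  intro n
  induction n using Nat.strong_induction_on with
  | _ n ih =>
  intro g hg h hlen hfh hfgh
  set w := Word.equiv h with hwdef
  have hw : w.prod = h := Word.equiv.left_inv h
  rcases hl : w.toList with _ | ⟨⟨j₁, m₁⟩, l'⟩
  · refine ⟨1, ?_⟩
    rw [map_one, ← hw, Word.prod, hl]; simp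
  rcases List.eq_nil_or_concat l' with rfl | ⟨mid, ⟨j₂, m₂⟩, rfl⟩
  · -- singleton case
    have hm₁ : m₁ ≠ 1 := w.ne_one ⟨j₁, m₁⟩ (by rw [hl]; simp)
    have hprod : h = CoprodI.of m₁ := by rw [← hw, Word.prod, hl]; simp
    by_cases hji : j₁ = i
    · subst hji; exact ⟨m₁, hprod.symm⟩
    · exfalso
      have hne1 : ∀ l ∈ [(⟨i, g⟩ : Σ i, M i), ⟨j₁, m₁⟩], l.snd ≠ 1 := by
        intro l hl'
        rcases List.mem_cons.mp hl' with rfl | hl'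
        · exact hg
        · rw [List.mem_singleton.mp hl']; exact hm₁
      set w2 : Word M := ⟨[⟨i, g⟩, ⟨j₁, m₁⟩], hne1,
        List.isChain_pair.mpr (Ne.symm hji)⟩ with hw2
      have hp2 : w2.prod = CoprodI.of g * h := by
        rw [hprod]; simp [Word.prod, hw2]
      refine not_isOfFinOrder_prod (w := w2) (x := ⟨i, g⟩) (y := ⟨j₁, m₁⟩)
        (by simp [hw2]) (by simp [hw2]) (Ne.symm hji) ?_
      rw [hp2]; exact hfgh
  · -- length ≥ 2 case
    rw [List.concat_eq_append] at hl
    have hm₁ : m₁ ≠ 1 := w.ne_one ⟨j₁, m₁⟩ (by rw [hl]; simp)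
    have hm₂ : m₂ ≠ 1 := w.ne_one ⟨j₂, m₂⟩ (by rw [hl]; simp)
    have hchain := w.chain_ne
    rw [hl] at hchain
    by_cases hj : j₁ = j₂
    swap
    · exfalso
      refine not_isOfFinOrder_prod (w := w) (x := ⟨j₁, m₁⟩) (y := ⟨j₂, m₂⟩)
        (by rw [hl]; simp) (by rw [hl, ← List.cons_append, List.getLast?_concat]) hj ?_
      rw [hw]; exact hfh
    subst hj
    by_cases hji : j₁ = i
    swap
    · exfalso
      have hchain2 : List.Chain' (fun a b : Σ i, M i => a.1 ≠ b.1) (⟨i, g⟩ :: w.toList) := by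
        refine List.isChain_cons.mpr ⟨?_, w.chain_ne⟩
        intro y hy
        rw [hl] at hy
        simp only [List.head?_cons, Option.mem_some_iff] at hy
        rw [← hy]
        exact fun hc => hji hc.symm
      have hne1 : ∀ l ∈ (⟨i, g⟩ : Σ i, M i) :: w.toList, l.snd ≠ 1 := by
        intro l hl'
        rcases List.mem_cons.mp hl' with rfl | hl'
        · exact hg
        · exact w.ne_one _ hl'
      set w2 : Word M := ⟨⟨i, g⟩ :: w.toList, hne1, hchain2⟩ with hw2
      have hp2 : w2.prod = CoprodI.of g * h := by
        rw [← hw]; simp [Word.prod, hw2]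
      refine not_isOfFinOrder_prod (w := w2) (x := ⟨i, g⟩) (y := ⟨j₁, m₂⟩)
        (by simp [hw2]) ?_ (fun hc => hji hc.symm) (by rw [hp2]; exact hfgh)
      show (⟨i, g⟩ :: w.toList).getLast? = some ⟨j₁, m₂⟩
      rw [hl, ← List.cons_append, ← List.cons_append, List.getLast?_concat]
    · subst hji
      -- now w.toList = ⟨i,m₁⟩ :: mid ++ [⟨i,m₂⟩]
      -- chain decomposition
      have hchain' : List.Chain' (fun a b : Σ i, M i => a.1 ≠ b.1) (mid ++ [⟨j₁, m₂⟩]) :=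
        hchain.tail
      obtain ⟨hcmid, -, hlastmid⟩ := List.isChain_append.mp hchain'
      have hheadmid : ∀ y ∈ (mid ++ [(⟨j₁, m₂⟩ : Σ i, M i)]).head?, (⟨j₁, m₁⟩ : Σ i, M i).1 ≠ y.1 :=
        (List.isChain_cons.mp hchain).1
      have hmidne : mid ≠ [] := by
        rintro rfl
        simp at hheadmid
      -- the middle word
      have hmidmem : ∀ l ∈ mid, l ∈ w.toList := by
        intro l hl'; rw [hl]; simp [hl']
      set wmid : Word M := ⟨mid, fun l hl' => w.ne_one l (hmidmem l hl'), hcmid⟩ with hwmid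
      set P : CoprodI M := wmid.prod with hP
      have hprodP : P = (mid.map fun l => CoprodI.of l.snd).prod := rfl
      have hprod : h = CoprodI.of m₁ * P * CoprodI.of m₂ := by
        rw [← hw, Word.prod, hl]
        simp [hprodP, List.prod_append, mul_assoc]
      -- head of mid has index ≠ j₁
      obtain ⟨⟨jh, mh⟩, mid', rfl⟩ := List.exists_cons_of_ne_nil hmidne
      have hjh : jh ≠ j₁ := by
        have := hheadmid ⟨jh, mh⟩ (by simp)
        exact fun hc => this (hc.symm)
      -- last of mid has index ≠ j₁
      have hlast' : ∀ a ∈ (⟨jh, mh⟩ :: mid').getLast?, a.1 ≠ j₁ := by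
        intro a ha
        have := hlastmid a ha ⟨j₁, m₂⟩ (by simp)
        exact this
      -- Step 1: m₂ * m₁ = 1
      have hm21 : m₂ * m₁ = 1 := by
        by_contra hmm
        have hchain3 : List.IsChain (fun a b : Σ i, M i => a.1 ≠ b.1)
            ((⟨jh, mh⟩ :: mid') ++ [⟨j₁, m₂ * m₁⟩]) := by
          refine List.isChain_append.mpr ⟨hcmid, List.isChain_singleton _, ?_⟩
          intro a ha y hy
          simp only [List.head?_cons, Option.mem_some_iff] at hy
          rw [← hy]
          exact hlast' a ha
        have hne3 : ∀ l ∈ (⟨jh, mh⟩ :: mid') ++ [(⟨j₁, m₂ * m₁⟩ : Σ i, M i)], l.snd ≠ 1 := by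
          intro l hl'
          rcases List.mem_append.mp hl' with hl' | hl'
          · exact w.ne_one l (hmidmem l hl')
          · rw [List.mem_singleton.mp hl']; exact hmm
        set w3 : Word M := ⟨(⟨jh, mh⟩ :: mid') ++ [⟨j₁, m₂ * m₁⟩], hne3, hchain3⟩ with hw3
        have hp3 : w3.prod = P * CoprodI.of (m₂ * m₁) := by
          simp [Word.prod, hw3, hprodP, List.prod_append, map_mul, mul_assoc]
        have hy : P * CoprodI.of (m₂ * m₁) = (CoprodI.of m₁)⁻¹ * h * CoprodI.of m₁ := by
          rw [hprod]; simp [map_mul, mul_assoc]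
        have hfy : IsOfFinOrder w3.prod := by
          rw [hp3, hy]
          have := isOfFinOrder_conj (CoprodI.of m₁)⁻¹ hfh
          simpa using this
        refine not_isOfFinOrder_prod (w := w3) (x := ⟨jh, mh⟩) (y := ⟨j₁, m₂ * m₁⟩)
          (by simp [hw3]) ?_ hjh hfy
        show ((⟨jh, mh⟩ :: mid') ++ [(⟨j₁, m₂ * m₁⟩ : Σ i, M i)]).getLast? = _
        rw [List.getLast?_concat]
      -- hence of m₂ = (of m₁)⁻¹
      have hm2inv : CoprodI.of m₂ = (CoprodI.of m₁)⁻¹ := by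
        rw [eq_inv_iff_mul_eq_one, ← map_mul, hm21, map_one]
      have hprod' : h = CoprodI.of m₁ * P * (CoprodI.of m₁)⁻¹ := by
        rw [hprod, hm2inv]
      -- P has finite order
      have hfP : IsOfFinOrder P := by
        have : P = (CoprodI.of m₁)⁻¹ * h * CoprodI.of m₁ := by
          rw [hprod']; group
        rw [this]
        have := isOfFinOrder_conj (CoprodI.of m₁)⁻¹ hfh
        simpa using this
      -- the conjugated g
      set g' : M j₁ := m₁⁻¹ * g * m₁ with hg'def
      have hg' : g' ≠ 1 := by
        intro hc
        apply hg
        have : g = m₁ * g' * m₁⁻¹ := by rw [hg'def]; group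
        rw [this, hc]; group
      have hfgP : IsOfFinOrder (CoprodI.of g' * P) := by
        have : CoprodI.of g' * P = (CoprodI.of m₁)⁻¹ * (CoprodI.of g * h) * CoprodI.of m₁ := by
          rw [hprod', hg'def]; simp [map_mul]; group
        rw [this]
        have := isOfFinOrder_conj (CoprodI.of m₁)⁻¹ hfgh
        simpa using this
      -- length decreases
      have hlenP : (Word.equiv P).toList.length = (⟨jh, mh⟩ :: mid').length := by
        have : Word.equiv P = wmid := Word.equiv.right_inv wmid
        rw [this]
      have hlt : (⟨jh, mh⟩ :: mid').length < n := by
        have h5 : w.toList.length = n := hlen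
        rw [hl] at h5
        simp only [List.length_cons, List.length_append, List.length_singleton] at h5 ⊢
        omega
      obtain ⟨m, hm⟩ := ih _ hlt g' hg' P (by rw [hlenP]) hfP hfgP
      -- contradiction: P is a nonempty word with head index ≠ j₁
      exfalso
      by_cases hm1 : m = 1
      · rw [hm1, map_one] at hm
        have : wmid = Word.empty := prod_eq_one_iff.mp hm.symm
        have := congrArg Word.toList this
        simp [hwmid, Word.empty] at this
      · have hsing : ∀ l ∈ [(⟨j₁, m⟩ : Σ i, M i)], l.snd ≠ 1 := by
          intro l hl'
          rw [List.mem_singleton.mp hl']; exact hm1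
        set wsing : Word M := ⟨[⟨j₁, m⟩], hsing, List.isChain_singleton _⟩ with hwsing
        have hps : wsing.prod = CoprodI.of m := by simp [Word.prod, hwsing]
        have : wsing = wmid := word_prod_injective (by rw [hps, hm])
        have hlists := congrArg Word.toList this
        simp only [hwsing, hwmid] at hlists
        have : (⟨j₁, m⟩ : Σ i, M i) = ⟨jh, mh⟩ := by
          have := congrArg List.head? hlists
          simpa using this
        exact hjh (congrArg Sigma.fst this).symm


universe u

variable {k q : ℕ}

/-- The combined family of factors: the `H i` together with the free group. -/
abbrev Mf (H : Fin k → Type u) (q : ℕ) : Option (Fin k) → Type u :=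
  fun o => Option.rec (ULift.{u} (FreeGroup (Fin q))) H o

variable (H : Fin k → Type u) [∀ i, Group (H i)]

instance : ∀ o, Group (Mf H q o) := fun o =>
  match o with
  | none => inferInstanceAs (Group (ULift (FreeGroup (Fin q))))
  | some i => inferInstanceAs (Group (H i))

def φ (q : ℕ) : Coprod (CoprodI H) (FreeGroup (Fin q)) →* CoprodI (Mf H q) :=
  Coprod.lift
    (CoprodI.lift fun i => (CoprodI.of (M := Mf H q) (i := some i)))
    ((CoprodI.of (M := Mf H q) (i := none)).comp
      (MulEquiv.ulift.symm : FreeGroup (Fin q) ≃* ULift (FreeGroup (Fin q))).toMonoidHom)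

def ψfun : ∀ o : Option (Fin k), Mf H q o →* Coprod (CoprodI H) (FreeGroup (Fin q))
  | none => Coprod.inr.comp MulEquiv.ulift.toMonoidHom
  | some i => Coprod.inl.comp (CoprodI.of : H i →* CoprodI H)

def ψ (q : ℕ) : CoprodI (Mf H q) →* Coprod (CoprodI H) (FreeGroup (Fin q)) :=
  CoprodI.lift (ψfun H)

theorem φ_inl_of (i : Fin k) (m : H i) :
    φ H q (Coprod.inl (CoprodI.of m)) = CoprodI.of (M := Mf H q) (i := some i) m := by
  simp [φ, Coprod.lift_apply_inl, CoprodI.lift_of]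

theorem ψ_of_some (i : Fin k) (m : Mf H q (some i)) :
    ψ H q (CoprodI.of m) = Coprod.inl (CoprodI.of (M := H) (i := i) m) := by
  simp only [ψ, CoprodI.lift_of, ψfun]
  rfl

theorem ψ_comp_φ : (ψ H q).comp (φ H q) = MonoidHom.id _ := by
  apply Coprod.hom_ext
  · apply CoprodI.ext_hom
    intro i
    apply MonoidHom.ext
    intro m
    simp only [MonoidHom.comp_apply, MonoidHom.id_apply]
    rw [φ_inl_of, ψ_of_some]
  · apply FreeGroup.ext_hom
    intro a
    simp only [MonoidHom.comp_apply, MonoidHom.id_apply]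
    simp [φ, ψ, Coprod.lift_apply_inr, CoprodI.lift_of, ψfun]

theorem ψ_φ (x : Coprod (CoprodI H) (FreeGroup (Fin q))) : ψ H q (φ H q x) = x :=
  DFunLike.congr_fun (ψ_comp_φ H) x

end FPAux

open Monoid

/-- Let `G = H₁ ∗ ⋯ ∗ H_k ∗ F_q` be a free product of finite groups `H i` and a free
group of rank `q`, and let `g` be a nontrivial element of the canonical image of
`H i` in `G`. Then `h` lies in (the image of) `H i` iff both `h` and `g * h` have
finite order in `G`. -/
theorem mem_factor_iff_finite_orders {k q : ℕ} (H : Fin k → Type*)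
    [∀ i, Group (H i)] [∀ i, Finite (H i)] (i : Fin k)
    (g h : Coprod (CoprodI H) (FreeGroup (Fin q)))
    (hg : g ∈ ((Coprod.inl : CoprodI H →* Coprod (CoprodI H) (FreeGroup (Fin q))).comp
        (CoprodI.of (i := i))).range)
    (hg1 : g ≠ 1) :
    h ∈ ((Coprod.inl : CoprodI H →* Coprod (CoprodI H) (FreeGroup (Fin q))).comp
        (CoprodI.of (i := i))).range ↔
      IsOfFinOrder h ∧ IsOfFinOrder (g * h) := by
  classical
  obtain ⟨a, ha⟩ := hg
  have ha1 : a ≠ 1 := by rintro rfl; apply hg1; rw [← ha]; simp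
  constructor
  · rintro ⟨m, hm⟩
    constructor
    · rw [← hm]
      exact MonoidHom.isOfFinOrder _ (isOfFinOrder_of_finite m)
    · rw [← hm, ← ha, ← map_mul]
      exact MonoidHom.isOfFinOrder _ (isOfFinOrder_of_finite (a * m))
  · rintro ⟨hfh, hfgh⟩
    letI : ∀ o, DecidableEq (FPAux.Mf H q o) := fun o => Classical.decEq _
    have hφg : FPAux.φ H q g = CoprodI.of (M := FPAux.Mf H q) (i := some i) a := by
      rw [← ha]; exact FPAux.φ_inl_of H i a
    have h1 : IsOfFinOrder (FPAux.φ H q h) := MonoidHom.isOfFinOrder _ hfh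
    have h2 : IsOfFinOrder
        (CoprodI.of (M := FPAux.Mf H q) (i := some i) a * FPAux.φ H q h) := by
      rw [← hφg, ← map_mul]
      exact MonoidHom.isOfFinOrder _ hfgh
    obtain ⟨m, hm⟩ := @FPAux.key (Option (Fin k)) (FPAux.Mf H q) (fun _ => inferInstance)
      (fun a b => Classical.dec _) (fun _ => Classical.decEq _) (some i)
      _ a ha1 (FPAux.φ H q h) rfl h1 h2
    refine ⟨m, ?_⟩
    have h3 := congrArg (FPAux.ψ H q) hm
    rw [FPAux.ψ_of_some] at h3
    rw [FPAux.ψ_φ] at h3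
    exact h3
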